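/- (TVD property for concentration) If c_i^{n+1} = (1 − b_i^n) c_i^n + b_i^n c_{i−1}^n with 0 ≤ b_i^n ≤ 1 for all i ∈ ℤ, and (c_i^n) has bounded total variation, then Σ_i |c_i^{n+1} − c_{i−1}^{n+1}| ≤ Σ_i |c_i^n − c_{i−1}^n|. -/
import Mathlib
set_option maxHeartbeats 1000000 in


/-- TVD property of the convex-combination concentration update. -/
theorem concentration_tvd
    (c c' : ℤ → ℝ) (b : ℤ → ℝ)
    (hb : ∀ i, b i ∈ Set.Icc (0:ℝ) 1)
    (hsum : Summable (fun i => |c i - c (i - 1)|))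
    (hupd : ∀ i, c' i = (1 - b i) * c i + b i * c (i - 1)) :
    ∑' i : ℤ, |c' i - c' (i - 1)| ≤ ∑' i : ℤ, |c i - c (i - 1)| := by
  set d : ℤ → ℝ := fun i => |c i - c (i - 1)| with hd
  have hd0 : ∀ i, 0 ≤ d i := fun i => abs_nonneg _
  have hbd : ∀ i, 0 ≤ b i ∧ b i ≤ 1 := fun i => (hb i)
  -- pointwise bound
  have key : ∀ i, |c' i - c' (i - 1)| ≤ (1 - b i) * d i + b (i - 1) * d (i - 1) := by
    intro i
    have h1 : c' i - c' (i - 1)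
        = (1 - b i) * (c i - c (i - 1)) + b (i - 1) * (c (i - 1) - c (i - 1 - 1)) := by
      rw [hupd i, hupd (i - 1)]; ring
    rw [h1]
    calc |(1 - b i) * (c i - c (i - 1)) + b (i - 1) * (c (i - 1) - c (i - 1 - 1))|
        ≤ |(1 - b i) * (c i - c (i - 1))| + |b (i - 1) * (c (i - 1) - c (i - 1 - 1))| :=
          abs_add_le _ _
      _ = (1 - b i) * d i + b (i - 1) * d (i - 1) := by
          rw [abs_mul, abs_mul, abs_of_nonneg (by linarith [(hbd i).2]),
            abs_of_nonneg (hbd (i - 1)).1]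
  -- summability pieces
  have hs1 : Summable (fun i => (1 - b i) * d i) := by
    apply Summable.of_nonneg_of_le
      (fun i => mul_nonneg (by linarith [(hbd i).2]) (hd0 i))
      (fun i => by nlinarith [(hbd i).1, hd0 i]) hsum
  have hs2' : Summable (fun i => b i * d i) := by
    apply Summable.of_nonneg_of_le
      (fun i => mul_nonneg (hbd i).1 (hd0 i))
      (fun i => by nlinarith [(hbd i).2, hd0 i]) hsum
  have hs2 : Summable (fun i => b (i - 1) * d (i - 1)) :=
    (Equiv.subRight (1:ℤ)).summable_iff.2 hs2'
  have hs3 : Summable (fun i => (1 - b i) * d i + b (i - 1) * d (i - 1)) := hs1.add hs2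
  have hs0 : Summable (fun i => |c' i - c' (i - 1)|) :=
    Summable.of_nonneg_of_le (fun i => abs_nonneg _) key hs3
  calc ∑' i : ℤ, |c' i - c' (i - 1)|
      ≤ ∑' i : ℤ, ((1 - b i) * d i + b (i - 1) * d (i - 1)) := Summable.tsum_le_tsum key hs0 hs3
    _ = (∑' i : ℤ, (1 - b i) * d i) + ∑' i : ℤ, b (i - 1) * d (i - 1) := Summable.tsum_add hs1 hs2
    _ = (∑' i : ℤ, (1 - b i) * d i) + ∑' i : ℤ, b i * d i := by
        rw [← (Equiv.subRight (1:ℤ)).tsum_eq (fun i => b i * d i)]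
        rfl
    _ = ∑' i : ℤ, ((1 - b i) * d i + b i * d i) := (Summable.tsum_add hs1 hs2').symm
    _ = ∑' i : ℤ, d i := by
        apply tsum_congr; intro i; ring
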